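/- For every N ≥ 1 the half-time kernels of the stochastically regularized solutions satisfy Ψ^(N+1) = 𝔑_g[Ψ^(N)] = (Σ_− ∘ Ψ^(N) ∘ Ψ^(N) ∘ Σ_+) ∗ Ξ; moreover, for every boundary value b_0 ∈ X and every initial condition a, the law of 𝔲^(N)(1) given a is the kernel Φ^(N)_{b_0} = (Ψ^(N) ∘ Ψ^(N)) ∗ B_{b_0}. -/

import Mathlib

open Filter Topology

namespace SSRG

variable {X : Type*}

/-- Upward shift map `σ₊(a) = (a₂, a₃, …)`. -/
def sigPlus (a : ℕ → X) : ℕ → X := fun i => a (i + 1)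

/-- Downward shift map `σ₋(a) = (0, a₁, a₂, …)`. -/
def sigMinus [Zero X] (a : ℕ → X) : ℕ → X := fun i =>
  match i with
  | 0 => 0
  | j + 1 => a j

/-- Coupling map `ξ(a) = (f(a₁,a₂), g(a₁,a₂), 0, 0, …)`. -/
def xiMap [Zero X] (f g : X → X → X) (a : ℕ → X) : ℕ → X := fun i =>
  match i with
  | 0 => f (a 0) (a 1)
  | 1 => g (a 0) (a 1)
  | _ + 2 => 0

/-- Boundary coupling map `β_b(a) = (g(b,a₁), 0, 0, …)`. -/
def betaMap [Zero X] (g : X → X → X) (b : X) (a : ℕ → X) : ℕ → X := fun i =>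
  match i with
  | 0 => g b (a 0)
  | _ + 1 => 0

/-- The renormalization group operator `R_g[ψ] = σ₋ ∘ ψ ∘ ψ ∘ σ₊ + ξ`. -/
def RGop [AddCommMonoid X] (f g : X → X → X) (ψ : (ℕ → X) → (ℕ → X)) :
    (ℕ → X) → (ℕ → X) :=
  fun a => sigMinus (ψ (ψ (sigPlus a))) + xiMap f g a

/-- The ideal equation at scale `n ≥ 1` and time `t = m·2⁻ⁿ`, `m ≥ 1`.
A field `u : ℕ → ℕ → X` records `u n m = uₙ(m·τₙ)`; row `0` is the boundary row,
`u 0 t = b_t` at integer times `t`. -/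
def IdealEq [AddCommMonoid X] (f g : X → X → X) (u : ℕ → ℕ → X) (n m : ℕ) : Prop :=
  if m % 2 = 1 then
    u n m = f (u n (m - 1)) (u (n + 1) (2 * (m - 1)))
  else
    u n m = f (u n (m - 1)) (u (n + 1) (2 * (m - 1))) +
      g (u (n - 1) ((m - 2) / 2)) (u n (m - 2))

/-- The regularized solution at regularization scale number `N`, with initial
conditions `a` (so `uₙ(0) = aₙ = a (n-1)` for `1 ≤ n ≤ N`) and boundary conditions
`b` (`u₀(t) = b t`): all variables at scales `n > N` vanish and the ideal equations
hold for `1 ≤ n ≤ N`. -/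
def IsRegSol [AddCommMonoid X] (f g : X → X → X) (N : ℕ) (a b : ℕ → X)
    (u : ℕ → ℕ → X) : Prop :=
  (∀ m, u 0 m = b m) ∧
  (∀ n, 1 ≤ n → n ≤ N → u n 0 = a (n - 1)) ∧
  (∀ n, N < n → ∀ m, u n m = 0) ∧
  (∀ n m, 1 ≤ n → n ≤ N → 1 ≤ m → IdealEq f g u n m)

/-- The state `u(1/2) = (u₁(1/2), u₂(1/2), …)` of a field. -/
def halfState (u : ℕ → ℕ → X) : ℕ → X := fun i => u (i + 1) (2 ^ i)

/-- The state `u(1) = (u₁(1), u₂(1), …)` of a field. -/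
def unitState (u : ℕ → ℕ → X) : ℕ → X := fun i => u (i + 1) (2 ^ (i + 1))

/-- The state `u(t) = (u₁(t), u₂(t), …)` of a field at an integer time `t`. -/
def intState (u : ℕ → ℕ → X) (t : ℕ) : ℕ → X := fun i => u (i + 1) (t * 2 ^ (i + 1))

/-- A weak solution of the ideal system: initial conditions `a`, boundary
conditions `b`, and the ideal equations at all points of the lattice. -/
def IsWeakSol [AddCommMonoid X] (f g : X → X → X) (a b : ℕ → X) (u : ℕ → ℕ → X) : Prop :=
  (∀ m, u 0 m = b m) ∧
  (∀ n, 1 ≤ n → u n 0 = a (n - 1)) ∧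
  (∀ n m, 1 ≤ n → 1 ≤ m → IdealEq f g u n m)

/-- Convergence of maps: `ψ N (a_N) → ψ∞ a` for every convergent sequence `a_N → a`
in `X^ℕ` with the product topology. -/
def MapConv [TopologicalSpace X] (ψ : ℕ → (ℕ → X) → (ℕ → X))
    (ψinf : (ℕ → X) → (ℕ → X)) : Prop :=
  ∀ (aN : ℕ → ℕ → X) (a : ℕ → X), Tendsto aN atTop (𝓝 a) →
    Tendsto (fun N => ψ N (aN N)) atTop (𝓝 (ψinf a))

open MeasureTheory ProbabilityTheory


/-- A separable metric space is second countable (instance form). -/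
instance (priority := 50) {Y : Type*} [MetricSpace Y] [TopologicalSpace.SeparableSpace Y] :
    SecondCountableTopology Y :=
  UniformSpace.secondCountable_of_separable Y

variable {X : Type*}

/-- The stochastically regularized solution at regularization scale number `N`,
with initial conditions `a`, boundary conditions `b` and a realization
`xs = (x₀, x₁, …)` of the noise: the variables at scale `N+1` are frozen to the
noise, `𝔲_{N+1}(m·τ_{N+1}) = x_m`, the variables at scales `n > N+1` vanish, and
the ideal equations hold for `1 ≤ n ≤ N`. -/
def IsStochRegSol [AddCommMonoid X] (f g : X → X → X) (N : ℕ) (a b : ℕ → X)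
    (xs : ℕ → X) (u : ℕ → ℕ → X) : Prop :=
  (∀ m, u 0 m = b m) ∧
  (∀ n, 1 ≤ n → n ≤ N → u n 0 = a (n - 1)) ∧
  (∀ m, u (N + 1) m = xs m) ∧
  (∀ n, N + 1 < n → ∀ m, u n m = 0) ∧
  (∀ n m, 1 ≤ n → n ≤ N → 1 ≤ m → IdealEq f g u n m)

section kernels

variable [MeasurableSpace X]

lemma measurable_sigPlus : Measurable (sigPlus (X := X)) :=
  measurable_pi_lambda _ fun i => measurable_pi_apply _

lemma measurable_sigMinus [Zero X] : Measurable (sigMinus (X := X)) := by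
  refine measurable_pi_lambda _ fun i => ?_
  cases i with
  | zero => exact measurable_const
  | succ j => exact measurable_pi_apply j

lemma measurable_xiMap [Zero X] (f g : X → X → X)
    (hf : Measurable fun p : X × X => f p.1 p.2)
    (hg : Measurable fun p : X × X => g p.1 p.2) :
    Measurable (xiMap f g) := by
  refine measurable_pi_lambda _ fun i => ?_
  match i with
  | 0 =>
    show Measurable fun a : ℕ → X => f (a 0) (a 1)
    have h01 : Measurable fun a : ℕ → X => (a 0, a 1) :=
      (measurable_pi_apply 0).prodMk (measurable_pi_apply 1)
    exact hf.comp h01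
  | 1 =>
    show Measurable fun a : ℕ → X => g (a 0) (a 1)
    have h01 : Measurable fun a : ℕ → X => (a 0, a 1) :=
      (measurable_pi_apply 0).prodMk (measurable_pi_apply 1)
    exact hg.comp h01
  | (k + 2) => exact measurable_const

lemma measurable_betaMap [Zero X] (g : X → X → X)
    (hg : Measurable fun p : X × X => g p.1 p.2) (b : X) :
    Measurable (betaMap g b) := by
  refine measurable_pi_lambda _ fun i => ?_
  match i with
  | 0 =>
    show Measurable fun a : ℕ → X => g b (a 0)
    have h0 : Measurable fun a : ℕ → X => ((b : X), a 0) :=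
      measurable_const.prodMk (measurable_pi_apply 0)
    exact hg.comp h0
  | (k + 1) => exact measurable_const

/-- Convolution of a kernel `κ` on `X^ℕ` with the deterministic kernel of a map
`c : X^ℕ → X^ℕ`:  `(κ ∗ C)(A|a) = κ({u : u + c(a) ∈ A}|a)`, i.e. the law of
`u + c(a)` where `u ∼ κ(·|a)`. -/
noncomputable def convKer [AddCommMonoid X]
    (κ : Kernel (ℕ → X) (ℕ → X)) (c : (ℕ → X) → (ℕ → X)) (hc : Measurable c) :
    Kernel (ℕ → X) (ℕ → X) :=
  Kernel.map (κ ×ₖ Kernel.deterministic c hc) (fun p => p.1 + p.2)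

/-- The stochastic RG operator `𝔑_g[Ψ] = (Σ₋ ∘ Ψ ∘ Ψ ∘ Σ₊) ∗ Ξ` acting on
probability kernels on `X^ℕ`. -/
noncomputable def stochRG [AddCommMonoid X] (f g : X → X → X)
    (hf : Measurable fun p : X × X => f p.1 p.2)
    (hg : Measurable fun p : X × X => g p.1 p.2)
    (Ψ : Kernel (ℕ → X) (ℕ → X)) : Kernel (ℕ → X) (ℕ → X) :=
  convKer
    (Kernel.deterministic sigMinus measurable_sigMinus ∘ₖ Ψ ∘ₖ Ψ ∘ₖ
      Kernel.deterministic sigPlus measurable_sigPlus)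
    (xiMap f g) (measurable_xiMap f g hf hg)

end kernels

/-! ### Auxiliary development for Statement 9 -/

section AuxDet

variable {X : Type*} [AddCommMonoid X]

private lemma auxW1 {m e : ℕ} (hm : 1 ≤ m) : (m - 1) * 2 ^ e < m * 2 ^ e :=
  Nat.mul_lt_mul_of_pos_right (by omega) (by positivity)

private lemma auxW4 {m e : ℕ} (hm : 1 ≤ m) : (m - 2) * 2 ^ e < m * 2 ^ e :=
  Nat.mul_lt_mul_of_pos_right (by omega) (by positivity)

private lemma auxW2 {N n m : ℕ} (hn : n ≤ N) (hm : 1 ≤ m) :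
    2 * (m - 1) * 2 ^ (N + 1 - (n + 1)) < m * 2 ^ (N + 1 - n) := by
  have h1 : N + 1 - n = (N + 1 - (n + 1)) + 1 := by omega
  rw [h1, pow_succ]
  calc 2 * (m - 1) * 2 ^ (N + 1 - (n + 1)) = (m - 1) * (2 ^ (N + 1 - (n + 1)) * 2) := by ring
    _ < m * (2 ^ (N + 1 - (n + 1)) * 2) :=
        Nat.mul_lt_mul_of_pos_right (by omega) (by positivity)

private lemma auxW3 {N n m : ℕ} (hn1 : 1 ≤ n) (hn : n ≤ N) (hm : 1 ≤ m) :
    (m - 2) / 2 * 2 ^ (N + 1 - (n - 1)) < m * 2 ^ (N + 1 - n) := by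
  have h1 : N + 1 - (n - 1) = (N + 1 - n) + 1 := by omega
  rw [h1, pow_succ]
  calc (m - 2) / 2 * (2 ^ (N + 1 - n) * 2) = (m - 2) / 2 * 2 * 2 ^ (N + 1 - n) := by ring
    _ ≤ (m - 2) * 2 ^ (N + 1 - n) := Nat.mul_le_mul (by omega) le_rfl
    _ < m * 2 ^ (N + 1 - n) := Nat.mul_lt_mul_of_pos_right (by omega) (by positivity)

/-- The canonical regularized solution with zero boundary conditions, built by
recursion on the real time `m · 2^{-n}` (weight `m · 2^{N+1-n}`), from initial
conditions `p.1` and noise `p.2` frozen at scale `N+1`. -/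
def solF (f g : X → X → X) (N : ℕ) (p : (ℕ → X) × (ℕ → X)) (n m : ℕ) : X :=
  if n = 0 then 0
  else if N + 1 < n then 0
  else if n = N + 1 then p.2 m
  else if m = 0 then p.1 (n - 1)
  else if m % 2 = 1 then
    f (solF f g N p n (m - 1)) (solF f g N p (n + 1) (2 * (m - 1)))
  else
    f (solF f g N p n (m - 1)) (solF f g N p (n + 1) (2 * (m - 1))) +
      g (solF f g N p (n - 1) ((m - 2) / 2)) (solF f g N p n (m - 2))
termination_by m * 2 ^ (N + 1 - n)
decreasing_by
  · exact auxW1 (by omega)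
  · exact auxW2 (by omega) (by omega)
  · exact auxW1 (by omega)
  · exact auxW2 (by omega) (by omega)
  · exact auxW3 (by omega) (by omega) (by omega)
  · exact auxW4 (by omega)

lemma isStochRegSol_solF (f g : X → X → X) (N : ℕ) (a xs : ℕ → X) :
    IsStochRegSol f g N a (fun _ => 0) xs (solF f g N (a, xs)) := by
  refine ⟨fun m => ?_, fun n hn hnN => ?_, fun m => ?_, fun n hn m => ?_,
    fun n m hn hnN hm => ?_⟩
  · rw [solF]; simp
  · rw [solF]
    rw [if_neg (show ¬ n = 0 by omega), if_neg (show ¬ N + 1 < n by omega),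
      if_neg (show ¬ n = N + 1 by omega), if_pos rfl]
  · rw [solF]
    rw [if_neg (show ¬ N + 1 = 0 by omega), if_neg (show ¬ N + 1 < N + 1 by omega),
      if_pos rfl]
  · rw [solF]
    rw [if_neg (show ¬ n = 0 by omega), if_pos hn]
  · unfold IdealEq
    by_cases hpar : m % 2 = 1
    · rw [if_pos hpar]
      conv_lhs => rw [solF]
      rw [if_neg (show ¬ n = 0 by omega), if_neg (show ¬ N + 1 < n by omega),
        if_neg (show ¬ n = N + 1 by omega), if_neg (show ¬ m = 0 by omega), if_pos hpar]
    · rw [if_neg hpar]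
      conv_lhs => rw [solF]
      rw [if_neg (show ¬ n = 0 by omega), if_neg (show ¬ N + 1 < n by omega),
        if_neg (show ¬ n = N + 1 by omega), if_neg (show ¬ m = 0 by omega), if_neg hpar]

end AuxDet
section AuxDet2

variable {X : Type*} [AddCommMonoid X]

lemma measurable_solF [MeasurableSpace X] [MeasurableAdd₂ X]
    {f g : X → X → X} (hf : Measurable fun p : X × X => f p.1 p.2)
    (hg : Measurable fun p : X × X => g p.1 p.2) (N : ℕ) (n m : ℕ) :
    Measurable fun p : (ℕ → X) × (ℕ → X) => solF f g N p n m := by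
  suffices H : ∀ k n m, m * 2 ^ (N + 1 - n) ≤ k →
      Measurable fun p : (ℕ → X) × (ℕ → X) => solF f g N p n m from H _ n m le_rfl
  intro k
  induction k using Nat.strong_induction_on with
  | _ k ih =>
    intro n m hk
    have hun : (fun p : (ℕ → X) × (ℕ → X) => solF f g N p n m)
        = fun p => if n = 0 then 0 else if N + 1 < n then 0 else if n = N + 1 then p.2 m
            else if m = 0 then p.1 (n - 1)
            else if m % 2 = 1 then
              f (solF f g N p n (m - 1)) (solF f g N p (n + 1) (2 * (m - 1)))
            else f (solF f g N p n (m - 1)) (solF f g N p (n + 1) (2 * (m - 1))) +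
              g (solF f g N p (n - 1) ((m - 2) / 2)) (solF f g N p n (m - 2)) := by
      funext p; rw [solF]
    rw [hun]
    split_ifs with h0 h1 h2 h3 h4
    · exact measurable_const
    · exact measurable_const
    · exact (measurable_pi_apply m).comp measurable_snd
    · exact (measurable_pi_apply (n - 1)).comp measurable_fst
    · have hm1 : 1 ≤ m := by omega
      have H1 := ih _ (lt_of_lt_of_le (auxW1 (e := N + 1 - n) hm1) hk) n (m - 1) le_rfl
      have H2 := ih _ (lt_of_lt_of_le (auxW2 (by omega) hm1) hk) (n + 1) (2 * (m - 1)) le_rfl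
      exact hf.comp (H1.prodMk H2)
    · have hm1 : 1 ≤ m := by omega
      have H1 := ih _ (lt_of_lt_of_le (auxW1 (e := N + 1 - n) hm1) hk) n (m - 1) le_rfl
      have H2 := ih _ (lt_of_lt_of_le (auxW2 (by omega) hm1) hk) (n + 1) (2 * (m - 1)) le_rfl
      have H3 := ih _ (lt_of_lt_of_le (auxW3 (by omega) (by omega) hm1) hk)
        (n - 1) ((m - 2) / 2) le_rfl
      have H4 := ih _ (lt_of_lt_of_le (auxW4 (e := N + 1 - n) hm1) hk) n (m - 2) le_rfl
      exact (hf.comp (H1.prodMk H2)).add (hg.comp (H3.prodMk H4))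

/-- Two regularized solutions whose initial conditions agree below scale number `N`
and whose noises agree before time `1/2` agree at all lattice points of time `≤ 1/2`
and scale `1 ≤ n ≤ N`, whatever the boundary conditions are. -/
lemma regionAgree {f g : X → X → X} {N : ℕ} {a b xs a' b' xs' : ℕ → X} {u u' : ℕ → ℕ → X}
    (hu : IsStochRegSol f g N a b xs u) (hu' : IsStochRegSol f g N a' b' xs' u')
    (ha : ∀ i, i < N → a i = a' i) (hxs : ∀ m, m < 2 ^ N → xs m = xs' m) :
    ∀ n m, 1 ≤ n → n ≤ N → m ≤ 2 ^ (n - 1) → u n m = u' n m := by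
  obtain ⟨-, hinit, hnoise, -, heq⟩ := hu
  obtain ⟨-, hinit', hnoise', -, heq'⟩ := hu'
  suffices H : ∀ k n m, 1 ≤ n → n ≤ N → m ≤ 2 ^ (n - 1) → m * 2 ^ (N + 1 - n) ≤ k →
      u n m = u' n m from fun n m h1 h2 h3 => H _ n m h1 h2 h3 le_rfl
  intro k
  induction k using Nat.strong_induction_on with
  | _ k ih =>
    intro n m hn hnN hreg hk
    rcases Nat.eq_zero_or_pos m with hm | hm
    · subst hm
      rw [hinit n hn hnN, hinit' n hn hnN]
      exact ha _ (by omega)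
    have hp1 : 2 ^ n = 2 * 2 ^ (n - 1) := by
      conv_lhs => rw [show n = (n - 1) + 1 by omega]
      rw [pow_succ]; ring
    have hupper : u (n + 1) (2 * (m - 1)) = u' (n + 1) (2 * (m - 1)) := by
      rcases Nat.lt_or_ge n N with hlt | hge
      · exact ih _ (lt_of_lt_of_le (auxW2 hnN hm) hk) (n + 1) (2 * (m - 1)) (by omega)
          (by omega) (by rw [Nat.add_sub_cancel]; omega) le_rfl
      · have hnN' : n = N := by omega
        subst hnN'
        rw [hnoise, hnoise']
        exact hxs _ (by omega)
    have hself : ∀ m', m' < m → u n m' = u' n m' := fun m' hm' =>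
      ih _ (lt_of_lt_of_le (Nat.mul_lt_mul_of_pos_right hm' (by positivity)) hk) n m' hn hnN
        (by omega) le_rfl
    have e := heq n m hn hnN hm
    have e' := heq' n m hn hnN hm
    unfold IdealEq at e e'
    by_cases hpar : m % 2 = 1
    · rw [if_pos hpar] at e e'
      rw [e, e', hself (m - 1) (by omega), hupper]
    · rw [if_neg hpar] at e e'
      have hn2 : 2 ≤ n := by
        by_contra h
        have hn1 : n = 1 := by omega
        subst hn1
        norm_num at hreg
        omega
      have hp3 : 2 ^ (n - 1) = 2 * 2 ^ (n - 2) := by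
        conv_lhs => rw [show n - 1 = (n - 2) + 1 by omega]
        rw [pow_succ]; ring
      have hdown : u (n - 1) ((m - 2) / 2) = u' (n - 1) ((m - 2) / 2) :=
        ih _ (lt_of_lt_of_le (auxW3 (by omega) hnN hm) hk) (n - 1) ((m - 2) / 2)
          (by omega) (by omega) (by rw [show n - 1 - 1 = n - 2 by omega]; omega) le_rfl
      rw [e, e', hself (m - 1) (by omega), hself (m - 2) (by omega), hupper, hdown]

/-- Two regularized solutions with the same noise and initial conditions agreeing
below scale number `N` have the same state at time `1/2`. -/
lemma halfEq {f g : X → X → X} {N : ℕ} {a b xs a' b' xs' : ℕ → X} {u u' : ℕ → ℕ → X}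
    (hu : IsStochRegSol f g N a b xs u) (hu' : IsStochRegSol f g N a' b' xs' u')
    (ha : ∀ i, i < N → a i = a' i) (hxs : ∀ m, xs m = xs' m) :
    halfState u = halfState u' := by
  funext i
  show u (i + 1) (2 ^ i) = u' (i + 1) (2 ^ i)
  rcases Nat.lt_or_ge i N with h | h
  · exact regionAgree hu hu' ha (fun m _ => hxs m) (i + 1) (2 ^ i) (by omega) (by omega)
      (by simp)
  rcases Nat.eq_or_lt_of_le h with h' | h'
  · subst h'
    rw [hu.2.2.1, hu'.2.2.1]
    exact hxs _
  · rw [hu.2.2.2.1 (i + 1) (by omega), hu'.2.2.2.1 (i + 1) (by omega)]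

end AuxDet2
section AuxDet3

variable {X : Type*} [AddCommMonoid X]

/-- The key decomposition: for a regularized solution `u`, the state at time `1`
is obtained from the state at time `1/2` by running any regularized solution `w`
started at `u(1/2)` with the noise shifted by half a unit of time, up to the
boundary correction `β_{b₀}`. -/
lemma unitDecomp {f g : X → X → X} {N : ℕ} {a b xs a'' b'' : ℕ → X} {u w : ℕ → ℕ → X}
    (hN : 1 ≤ N)
    (hu : IsStochRegSol f g N a b xs u)
    (hw : IsStochRegSol f g N a'' b'' (fun m => xs (m + 2 ^ N)) w)
    (ha'' : ∀ i, i < N → a'' i = u (i + 1) (2 ^ i)) :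
    unitState u = halfState w + betaMap g (b 0) a := by
  obtain ⟨hb, hinit, hnoise, hzero, heq⟩ := hu
  obtain ⟨-, hinit'', hnoise'', hzero'', heq''⟩ := hw
  have key : ∀ k n m, 1 ≤ n → n ≤ N + 1 →
      (n = N + 1 ∨ (m ≤ 2 ^ (n - 1) ∧ ¬(n = 1 ∧ m = 1))) →
      m * 2 ^ (N + 1 - n) ≤ k → w n m = u n (m + 2 ^ (n - 1)) := by
    intro k
    induction k using Nat.strong_induction_on with
    | _ k ih =>
      intro n m hn hnN hcond hk
      by_cases hcase : n = N + 1
      · subst hcase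
        rw [hnoise'' m, show N + 1 - 1 = N from rfl, hnoise (m + 2 ^ N)]
      · have hnN' : n ≤ N := by omega
        obtain ⟨hreg, hexc⟩ := hcond.resolve_left hcase
        rcases Nat.eq_zero_or_pos m with hm | hm
        · subst hm
          rw [hinit'' n hn hnN', ha'' (n - 1) (by omega), show n - 1 + 1 = n by omega,
            Nat.zero_add]
        have hn2 : 2 ≤ n := by
          by_contra h
          have hn1 : n = 1 := by omega
          subst hn1
          norm_num at hreg
          exact hexc ⟨rfl, by omega⟩
        have hp1 : 2 ^ (n - 1) = 2 * 2 ^ (n - 2) := by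
          conv_lhs => rw [show n - 1 = (n - 2) + 1 by omega]
          rw [pow_succ]; ring
        have hp2 : 2 ^ n = 2 * 2 ^ (n - 1) := by
          conv_lhs => rw [show n = (n - 1) + 1 by omega]
          rw [pow_succ]; ring
        have ew := heq'' n m hn hnN' hm
        have eu := heq n (m + 2 ^ (n - 1)) hn hnN' (by omega)
        unfold IdealEq at ew eu
        have harg1 : m + 2 ^ (n - 1) - 1 = (m - 1) + 2 ^ (n - 1) := by omega
        have harg2 : 2 * (m + 2 ^ (n - 1) - 1) = 2 * (m - 1) + 2 ^ (n + 1 - 1) := by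
          rw [Nat.add_sub_cancel]
          omega
        have IH1 : w n (m - 1) = u n ((m - 1) + 2 ^ (n - 1)) :=
          ih _ (lt_of_lt_of_le (auxW1 hm) hk) n (m - 1) hn hnN
            (Or.inr ⟨by omega, by omega⟩) le_rfl
        have IH2 : w (n + 1) (2 * (m - 1)) = u (n + 1) (2 * (m - 1) + 2 ^ (n + 1 - 1)) :=
          ih _ (lt_of_lt_of_le (auxW2 hnN' hm) hk) (n + 1) (2 * (m - 1)) (by omega) (by omega)
            (Or.inr ⟨by rw [Nat.add_sub_cancel]; omega, by omega⟩) le_rfl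
        by_cases hpar : m % 2 = 1
        · rw [if_pos hpar] at ew
          rw [if_pos (show (m + 2 ^ (n - 1)) % 2 = 1 by omega)] at eu
          rw [ew, eu, harg2, harg1, IH1, IH2]
        · rw [if_neg hpar] at ew
          rw [if_neg (show ¬(m + 2 ^ (n - 1)) % 2 = 1 by omega)] at eu
          have hm2 : 2 ≤ m := by omega
          have harg3 : m + 2 ^ (n - 1) - 2 = (m - 2) + 2 ^ (n - 1) := by omega
          have harg4 : (m + 2 ^ (n - 1) - 2) / 2 = (m - 2) / 2 + 2 ^ (n - 1 - 1) := by
            rw [show n - 1 - 1 = n - 2 by omega]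
            omega
          have IH3 : w n (m - 2) = u n ((m - 2) + 2 ^ (n - 1)) :=
            ih _ (lt_of_lt_of_le (auxW4 hm) hk) n (m - 2) hn hnN
              (Or.inr ⟨by omega, by omega⟩) le_rfl
          have IH4 : w (n - 1) ((m - 2) / 2) = u (n - 1) ((m - 2) / 2 + 2 ^ (n - 1 - 1)) :=
            ih _ (lt_of_lt_of_le (auxW3 (by omega) hnN' hm) hk) (n - 1) ((m - 2) / 2)
              (by omega) (by omega)
              (Or.inr ⟨by rw [show n - 1 - 1 = n - 2 by omega]; omega, by
                rintro ⟨h1, h2⟩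
                have hn2' : n = 2 := by omega
                subst hn2'
                norm_num at hreg
                omega⟩) le_rfl
          rw [ew, eu, harg2, harg4, harg1, harg3, IH1, IH2, IH3, IH4]
  funext i
  cases i with
  | zero =>
    have e := heq 1 2 le_rfl hN (by omega)
    unfold IdealEq at e
    rw [if_neg (by norm_num)] at e
    norm_num at e
    have ew := heq'' 1 1 le_rfl hN le_rfl
    unfold IdealEq at ew
    rw [if_pos (by norm_num)] at ew
    norm_num at ew
    have h10 : w 1 0 = u 1 1 := by
      have := key 0 1 0 le_rfl (by omega) (Or.inr ⟨by norm_num, by simp⟩) (by simp)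
      simpa using this
    have h20 : w 2 0 = u 2 2 := by
      have := key 0 2 0 (by omega) (by omega) (Or.inr ⟨by simp, by simp⟩) (by simp)
      simpa using this
    calc unitState u 0 = u 1 2 := by norm_num [unitState]
      _ = f (u 1 1) (u 2 2) + g (b 0) (a 0) := by
          rw [e, hb 0, hinit 1 le_rfl hN]
      _ = w 1 1 + g (b 0) (a 0) := by rw [ew, h10, h20]
      _ = (halfState w + betaMap g (b 0) a) 0 := by
          norm_num [halfState, betaMap, Pi.add_apply]
  | succ j =>
    have hbz : betaMap g (b 0) a (j + 1) = 0 := rfl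
    rcases Nat.lt_or_ge (j + 2) (N + 2) with hle | hgt
    · have hk := key (2 ^ (j + 1) * 2 ^ (N + 1 - (j + 2))) (j + 2) (2 ^ (j + 1))
        (by omega) (by omega)
        (Or.inr ⟨by norm_num, by omega⟩) le_rfl
      have hps : (2 : ℕ) ^ (j + 1) + 2 ^ (j + 2 - 1) = 2 ^ (j + 2) := by
        have hp : (2 : ℕ) ^ (j + 2) = 2 * 2 ^ (j + 1) := by rw [pow_succ]; ring
        norm_num
        omega
      calc unitState u (j + 1) = u (j + 2) (2 ^ (j + 2)) := rfl
        _ = w (j + 2) (2 ^ (j + 1)) := by rw [hk, hps]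
        _ = (halfState w + betaMap g (b 0) a) (j + 1) := by
            rw [Pi.add_apply, hbz, add_zero]; rfl
    · rw [Pi.add_apply, hbz, add_zero]
      show u (j + 2) (2 ^ (j + 2)) = w (j + 2) (2 ^ (j + 1))
      rw [hzero _ (by omega), hzero'' _ (by omega)]

/-- Dropping the lowest scale of a regularized solution at scale number `N+1`
yields a regularized solution at scale number `N`, with the old scale-1 variables
as boundary conditions. -/
lemma shiftRows {f g : X → X → X} {N : ℕ} {a b xs : ℕ → X} {u : ℕ → ℕ → X}
    (hu : IsStochRegSol f g (N + 1) a b xs u) :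
    IsStochRegSol f g N (sigPlus a) (fun m => u 1 m) xs (fun n m => u (n + 1) m) := by
  obtain ⟨hb, hinit, hnoise, hzero, heq⟩ := hu
  refine ⟨fun m => rfl, fun n hn hnN => ?_, fun m => hnoise m,
    fun n hn m => hzero (n + 1) (by omega) m, fun n m hn hnN hm => ?_⟩
  · show u (n + 1) 0 = sigPlus a (n - 1)
    rw [hinit (n + 1) (by omega) (by omega)]
    show a (n + 1 - 1) = a (n - 1 + 1)
    congr 1
    omega
  · have h := heq (n + 1) m (by omega) (by omega) hm
    simp only [IdealEq] at h ⊢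
    rw [show n - 1 + 1 = n by omega]
    simpa using h

end AuxDet3
section AuxProb

open MeasureTheory ProbabilityTheory

variable {X : Type*} [AddCommMonoid X] [MeasurableSpace X]

/-- The state at time `1/2` of the canonical regularized solution. -/
def solHalf (f g : X → X → X) (N : ℕ) (z ys : ℕ → X) : ℕ → X :=
  halfState (solF f g N (z, ys))

lemma solHalf_congr {f g : X → X → X} {N : ℕ} {z z' : ℕ → X} (ys : ℕ → X)
    (h : ∀ i, i < N → z i = z' i) : solHalf f g N z ys = solHalf f g N z' ys :=
  halfEq (isStochRegSol_solF f g N z ys) (isStochRegSol_solF f g N z' ys) h fun _ => rfl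

lemma solHalf_noise {f g : X → X → X} {N : ℕ} (z : ℕ → X) {ys ys' : ℕ → X}
    (h : ∀ m, m < 2 ^ N → ys m = ys' m) :
    ∀ i, i < N → solHalf f g N z ys i = solHalf f g N z ys' i := fun i hi =>
  regionAgree (isStochRegSol_solF f g N z ys) (isStochRegSol_solF f g N z ys')
    (fun _ _ => rfl) h (i + 1) (2 ^ i) (by omega) (by omega) (by simp)

lemma measurable_solHalf [MeasurableAdd₂ X] {f g : X → X → X}
    (hf : Measurable fun p : X × X => f p.1 p.2)
    (hg : Measurable fun p : X × X => g p.1 p.2) (N : ℕ) :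
    Measurable fun p : (ℕ → X) × (ℕ → X) => solHalf f g N p.1 p.2 :=
  measurable_pi_lambda _ fun i => by
    have h : (fun p : (ℕ → X) × (ℕ → X) => solHalf f g N p.1 p.2 i)
        = fun p => solF f g N p (i + 1) (2 ^ i) := rfl
    rw [h]
    exact measurable_solF hf hg N (i + 1) (2 ^ i)

variable {Ω : Type*} [MeasurableSpace Ω] {P : Measure Ω} [IsProbabilityMeasure P]
  {μx : Measure X} {x : ℕ → Ω → X}

lemma iid_inter_preimage (hxmeas : ∀ m, Measurable (x m))
    (hxlaw : ∀ m, Measure.map (x m) P = μx)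
    (hxindep : iIndepFun x P)
    (c : ℕ → ℕ) (hc : Function.Injective c) (J : Finset ℕ) (t : ℕ → Set X)
    (ht : ∀ i, MeasurableSet (t i)) :
    P (⋂ i ∈ J, x (c i) ⁻¹' t i) = ∏ i ∈ J, μx (t i) := by
  classical
  have hmeas : ∀ j, j ∈ J.image c →
      MeasurableSet[(inferInstance : MeasurableSpace X).comap (x j)]
        (x j ⁻¹' t (Function.invFun c j)) := fun j _ => ⟨t (Function.invFun c j), ht _, rfl⟩
  have h := hxindep.meas_biInter hmeas
  have hL : ⋂ j ∈ J.image c, x j ⁻¹' t (Function.invFun c j) = ⋂ i ∈ J, x (c i) ⁻¹' t i := by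
    rw [Finset.set_biInter_finset_image]
    exact Set.iInter₂_congr fun i hi => by rw [Function.leftInverse_invFun hc i]
  have hR : ∏ j ∈ J.image c, P (x j ⁻¹' t (Function.invFun c j)) = ∏ i ∈ J, μx (t i) := by
    rw [Finset.prod_image (fun i _ j _ hcc => hc hcc)]
    refine Finset.prod_congr rfl fun i _ => ?_
    rw [Function.leftInverse_invFun hc i, ← hxlaw (c i),
      Measure.map_apply (hxmeas _) (ht i)]
  rw [← hL, h, hR]

lemma law_reindex (hxmeas : ∀ m, Measurable (x m))
    (hxlaw : ∀ m, Measure.map (x m) P = μx)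
    (hxindep : iIndepFun x P)
    (c : ℕ → ℕ) (hc : Function.Injective c) :
    Measure.map (fun ω => fun m => x (c m) ω) P = Measure.map (fun ω => fun m => x m ω) P := by
  have hYc : Measurable fun ω => fun m => x (c m) ω :=
    measurable_pi_lambda _ fun m => hxmeas (c m)
  have hY : Measurable fun ω => fun m => x m ω := measurable_pi_lambda _ fun m => hxmeas m
  haveI : IsProbabilityMeasure (Measure.map (fun ω => fun m => x (c m) ω) P) :=
    Measure.isProbabilityMeasure_map hYc.aemeasurable
  refine ext_of_generate_finite _ generateFrom_squareCylinders.symm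
    (isPiSystem_squareCylinders (fun i s hs t ht _ => hs.inter ht)
      (fun i => MeasurableSet.univ)) ?_ ?_
  · rintro S ⟨J, t, htm, rfl⟩
    rw [Set.mem_univ_pi] at htm
    have hS : MeasurableSet ((J : Set ℕ).pi t) :=
      MeasurableSet.pi (Finset.countable_toSet J) fun i _ => htm i
    rw [Measure.map_apply hYc hS, Measure.map_apply hY hS]
    have hpre : ∀ c' : ℕ → ℕ, (fun ω => fun m => x (c' m) ω) ⁻¹' ((J : Set ℕ).pi t)
        = ⋂ i ∈ J, x (c' i) ⁻¹' t i := by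
      intro c'
      ext ω
      simp [Set.mem_pi]
    rw [hpre c, hpre (fun m => m),
      iid_inter_preimage hxmeas hxlaw hxindep c hc J t htm,
      iid_inter_preimage hxmeas hxlaw hxindep (fun m => m) (fun _ _ hh => hh) J t htm]
  · rw [Measure.map_apply hYc MeasurableSet.univ, Measure.map_apply hY MeasurableSet.univ]
    simp

lemma indep_blocks [Zero X] (hxmeas : ∀ m, Measurable (x m))
    (hxindep : iIndepFun x P) (S : ℕ) :
    IndepFun (fun ω => fun m => if m < S then x m ω else 0)
      (fun ω => fun m => x (m + S) ω) P := by
  rw [IndepFun_iff_Indep]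
  have h := indep_iSup_of_disjoint
    (m := fun i : ℕ => MeasurableSpace.comap (x i) inferInstance)
    (fun i => (hxmeas i).comap_le) hxindep.iIndep
    (S := {i : ℕ | i < S}) (T := {i : ℕ | S ≤ i})
    (by rw [Set.disjoint_left]; intro i hi hi'; simp only [Set.mem_setOf_eq] at hi hi'; omega)
  have hY1m : @Measurable Ω (ℕ → X)
      (⨆ i ∈ {i : ℕ | i < S}, MeasurableSpace.comap (x i) inferInstance) _
      (fun ω => fun m => if m < S then x m ω else 0) := by
    letI : MeasurableSpace Ω := ⨆ i ∈ {i : ℕ | i < S}, MeasurableSpace.comap (x i) inferInstance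
    refine measurable_pi_lambda _ fun m => ?_
    by_cases hm : m < S
    · simp only [if_pos hm]
      exact measurable_iff_comap_le.mpr
        (le_iSup₂ (f := fun i (_ : i ∈ {i : ℕ | i < S}) =>
          MeasurableSpace.comap (x i) inferInstance) m hm)
    · simp only [if_neg hm]
      exact measurable_const
  have hY2m : @Measurable Ω (ℕ → X)
      (⨆ i ∈ {i : ℕ | S ≤ i}, MeasurableSpace.comap (x i) inferInstance) _
      (fun ω => fun m => x (m + S) ω) := by
    letI : MeasurableSpace Ω := ⨆ i ∈ {i : ℕ | S ≤ i}, MeasurableSpace.comap (x i) inferInstance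
    refine measurable_pi_lambda _ fun m => ?_
    exact measurable_iff_comap_le.mpr
      (le_iSup₂ (f := fun i (_ : i ∈ {i : ℕ | S ≤ i}) =>
        MeasurableSpace.comap (x i) inferInstance) (m + S) (by simp))
  have hY1le := (@measurable_iff_comap_le Ω (ℕ → X)
      (⨆ i ∈ {i : ℕ | i < S}, MeasurableSpace.comap (x i) inferInstance) _ _).mp hY1m
  have hY2le := (@measurable_iff_comap_le Ω (ℕ → X)
      (⨆ i ∈ {i : ℕ | S ≤ i}, MeasurableSpace.comap (x i) inferInstance) _ _).mp hY2m
  exact indep_of_indep_of_le_right (indep_of_indep_of_le_left h hY1le) hY2le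

end AuxProb
section AuxProb2

open MeasureTheory ProbabilityTheory

variable {X : Type*} [AddCommMonoid X] [MeasurableSpace X]

lemma measurable_addPi [MeasurableAdd₂ X] :
    Measurable fun p : (ℕ → X) × (ℕ → X) => p.1 + p.2 :=
  measurable_pi_lambda _ fun i =>
    ((measurable_pi_apply i).comp measurable_fst).add
      ((measurable_pi_apply i).comp measurable_snd)

lemma convKer_apply' [MeasurableAdd₂ X] (κ : Kernel (ℕ → X) (ℕ → X)) [IsMarkovKernel κ]
    (c : (ℕ → X) → (ℕ → X)) (hc : Measurable c) (a : ℕ → X) :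
    convKer κ c hc a = (κ a).map (fun u => u + c a) := by
  rw [convKer, Kernel.map_apply _ measurable_addPi, Kernel.prod_apply,
    Kernel.deterministic_apply, Measure.prod_dirac,
    Measure.map_map measurable_addPi measurable_prodMk_right]
  rfl

variable {Ω : Type*} [MeasurableSpace Ω] {P : Measure Ω} [IsProbabilityMeasure P]
  {μx : Measure X} {x : ℕ → Ω → X}

lemma keyLaw [MeasurableAdd₂ X]
    {f g : X → X → X} (hf : Measurable fun p : X × X => f p.1 p.2)
    (hg : Measurable fun p : X × X => g p.1 p.2)
    (hxmeas : ∀ m, Measurable (x m))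
    (hxlaw : ∀ m, Measure.map (x m) P = μx)
    (hxindep : iIndepFun x P)
    {Ψ : ℕ → Kernel (ℕ → X) (ℕ → X)} {N : ℕ}
    (hPsiF : ∀ z : ℕ → X, Ψ N z =
      Measure.map (fun ω => solHalf f g N z (fun m => x m ω)) P)
    (a' : ℕ → X) :
    Measure.map (fun ω => solHalf f g N (solHalf f g N a' (fun m => x m ω))
      (fun m => x (m + 2 ^ N) ω)) P = (Ψ N ∘ₖ Ψ N) a' := by
  have hH2 : Measurable fun p : (ℕ → X) × (ℕ → X) => solHalf f g N p.1 p.2 :=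
    measurable_solHalf hf hg N
  have hXv : Measurable fun ω => fun m => x m ω := measurable_pi_lambda _ fun m => hxmeas m
  have hY₁ : Measurable fun ω => fun m => if m < 2 ^ N then x m ω else 0 :=
    measurable_pi_lambda _ fun m => by
      by_cases hm : m < 2 ^ N
      · simp only [if_pos hm]; exact hxmeas m
      · simp only [if_neg hm]; exact measurable_const
  have hY₂ : Measurable fun ω => fun m => x (m + 2 ^ N) ω :=
    measurable_pi_lambda _ fun m => hxmeas (m + 2 ^ N)
  have hG : Measurable fun p : (ℕ → X) × (ℕ → X) =>
      solHalf f g N (solHalf f g N a' p.1) p.2 :=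
    hH2.comp ((hH2.comp (measurable_const.prodMk measurable_fst)).prodMk measurable_snd)
  have hptw : (fun ω => solHalf f g N (solHalf f g N a' (fun m => x m ω))
      (fun m => x (m + 2 ^ N) ω))
      = (fun p : (ℕ → X) × (ℕ → X) => solHalf f g N (solHalf f g N a' p.1) p.2) ∘
        (fun ω => ((fun m => if m < 2 ^ N then x m ω else 0), fun m => x (m + 2 ^ N) ω)) := by
    funext ω
    exact solHalf_congr _ (solHalf_noise a' fun m hm => (if_pos hm).symm)
  rw [hptw, ← Measure.map_map hG (hY₁.prodMk hY₂),
    (indepFun_iff_map_prod_eq_prod_map_map hY₁.aemeasurable hY₂.aemeasurable).mp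
      (indep_blocks hxmeas hxindep (2 ^ N))]
  haveI : IsProbabilityMeasure
      (Measure.map (fun ω => fun m => if m < 2 ^ N then x m ω else 0) P) :=
    Measure.isProbabilityMeasure_map hY₁.aemeasurable
  haveI : IsProbabilityMeasure (Measure.map (fun ω => fun m => x (m + 2 ^ N) ω) P) :=
    Measure.isProbabilityMeasure_map hY₂.aemeasurable
  ext s hs
  rw [Measure.map_apply hG hs, Measure.prod_apply (hG hs), Kernel.comp_apply' _ _ _ hs]
  have hstep : ∀ z : ℕ → X,
      (Measure.map (fun ω => fun m => x (m + 2 ^ N) ω) P)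
        (Prod.mk z ⁻¹' ((fun p : (ℕ → X) × (ℕ → X) =>
          solHalf f g N (solHalf f g N a' p.1) p.2) ⁻¹' s))
      = Ψ N (solHalf f g N a' z) s := by
    intro z
    have hFz : Measurable fun ys => solHalf f g N (solHalf f g N a' z) ys :=
      hH2.comp (measurable_const.prodMk measurable_id)
    have h1 : Prod.mk z ⁻¹' ((fun p : (ℕ → X) × (ℕ → X) =>
        solHalf f g N (solHalf f g N a' p.1) p.2) ⁻¹' s)
        = (fun ys => solHalf f g N (solHalf f g N a' z) ys) ⁻¹' s := rfl
    have hcomp : Measurable fun ω => solHalf f g N (solHalf f g N a' z) (fun m => x m ω) :=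
      hFz.comp hXv
    rw [h1, law_reindex hxmeas hxlaw hxindep (fun m => m + 2 ^ N) (add_left_injective (2 ^ N)),
      Measure.map_apply hXv (hFz hs), hPsiF (solHalf f g N a' z),
      Measure.map_apply hcomp hs]
    rfl
  have hFa' : Measurable fun ys : ℕ → X => solHalf f g N a' ys :=
    hH2.comp (measurable_const.prodMk measurable_id)
  have hq : Measurable fun z : ℕ → X => Ψ N (solHalf f g N a' z) s :=
    (Kernel.measurable_coe _ hs).comp hFa'
  rw [lintegral_congr hstep, lintegral_map hq hY₁]
  have hptw2 : ∀ ω, Ψ N (solHalf f g N a' (fun m => if m < 2 ^ N then x m ω else 0)) s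
      = Ψ N (solHalf f g N a' (fun m => x m ω)) s := by
    intro ω
    have hzz : Ψ N (solHalf f g N a' (fun m => if m < 2 ^ N then x m ω else 0))
        = Ψ N (solHalf f g N a' (fun m => x m ω)) := by
      rw [hPsiF, hPsiF]
      congr 1
      funext ω'
      exact solHalf_congr _ (solHalf_noise a' fun m hm => if_pos hm)
    rw [hzz]
  have hcomp2 : Measurable fun ω => solHalf f g N a' (fun m => x m ω) := hFa'.comp hXv
  rw [lintegral_congr hptw2, ← lintegral_map (Kernel.measurable_coe _ hs) hcomp2, ← hPsiF a']

end AuxProb2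
/-- For every `N ≥ 1` the half-time kernels `Ψ^{(N)}` of the
stochastically regularized solutions (pinned down, via `hΨ` and `hex`, as the laws
of `𝔲^{(N)}(1/2)` given the initial condition) satisfy
`Ψ^{(N+1)} = 𝔑_g[Ψ^{(N)}] = (Σ₋ ∘ Ψ^{(N)} ∘ Ψ^{(N)} ∘ Σ₊) ∗ Ξ`; moreover, for
every boundary value `b₀ = b 0` and initial condition `a`, the law of `𝔲^{(N)}(1)`
given `a` is the kernel `Φ^{(N)}_{b₀} = (Ψ^{(N)} ∘ Ψ^{(N)}) ∗ B_{b₀}` evaluated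
at `a`. -/
theorem statement9 {X : Type*} [MetricSpace X] [CompleteSpace X]
    [TopologicalSpace.SeparableSpace X] [MeasurableSpace X] [BorelSpace X]
    [AddCommMonoid X] [ContinuousAdd X]
    (f g : X → X → X) (hf : Continuous fun p : X × X => f p.1 p.2)
    (hg : Continuous fun p : X × X => g p.1 p.2)
    {Ω : Type*} [MeasurableSpace Ω] (P : Measure Ω) [IsProbabilityMeasure P]
    (μx : Measure X) [IsProbabilityMeasure μx]
    (x : ℕ → Ω → X) (hxmeas : ∀ m, Measurable (x m))
    (hxlaw : ∀ m, Measure.map (x m) P = μx)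
    (hxindep : iIndepFun x P)
    (Ψ : ℕ → Kernel (ℕ → X) (ℕ → X))
    (hΨ : ∀ N, 1 ≤ N → ∀ (a' b' : ℕ → X) (V : Ω → ℕ → ℕ → X), Measurable V →
      (∀ ω, IsStochRegSol f g N a' b' (fun m => x m ω) (V ω)) →
      Ψ N a' = Measure.map (fun ω => halfState (V ω)) P)
    (hex : ∀ N, 1 ≤ N → ∀ a' b' : ℕ → X, ∃ V : Ω → ℕ → ℕ → X,
      Measurable V ∧ ∀ ω, IsStochRegSol f g N a' b' (fun m => x m ω) (V ω)) :
    (∀ N, 1 ≤ N → Ψ (N + 1) = stochRG f g hf.measurable hg.measurable (Ψ N)) ∧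
    (∀ N, 1 ≤ N → ∀ (a b : ℕ → X) (U : Ω → ℕ → ℕ → X), Measurable U →
      (∀ ω, IsStochRegSol f g N a b (fun m => x m ω) (U ω)) →
      Measure.map (fun ω => unitState (U ω)) P =
        convKer (Ψ N ∘ₖ Ψ N) (betaMap g (b 0))
          (measurable_betaMap g hg.measurable (b 0)) a) := by
  classical
  have hfm : Measurable fun p : X × X => f p.1 p.2 := hf.measurable
  have hgm : Measurable fun p : X × X => g p.1 p.2 := hg.measurable
  have hMarkov : ∀ N, 1 ≤ N → IsMarkovKernel (Ψ N) := by
    intro N hN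
    constructor
    intro a'
    obtain ⟨V, hV, hVsol⟩ := hex N hN a' (fun _ => 0)
    rw [hΨ N hN a' (fun _ => 0) V hV hVsol]
    have hm : Measurable fun ω => halfState (V ω) :=
      measurable_pi_lambda _ fun i => (measurable_pi_apply (2 ^ i)).comp
        ((measurable_pi_apply (i + 1)).comp hV)
    exact Measure.isProbabilityMeasure_map hm.aemeasurable
  have hPsiF : ∀ N, 1 ≤ N → ∀ z : ℕ → X, Ψ N z =
      Measure.map (fun ω => solHalf f g N z (fun m => x m ω)) P := by
    intro N hN z
    have hVme : Measurable fun ω => solF f g N (z, fun m => x m ω) :=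
      measurable_pi_lambda _ fun n => measurable_pi_lambda _ fun m =>
        (measurable_solF hfm hgm N n m).comp
          (measurable_const.prodMk (measurable_pi_lambda _ fun i => hxmeas i))
    exact hΨ N hN z (fun _ => 0) _ hVme fun ω => isStochRegSol_solF f g N z (fun m => x m ω)
  have hxindep' : iIndepFun x P := hxindep
  have hH2 : ∀ N : ℕ, Measurable fun p : (ℕ → X) × (ℕ → X) => solHalf f g N p.1 p.2 :=
    fun N => measurable_solHalf hfm hgm N
  have hXv : Measurable fun ω => fun m : ℕ => x m ω := measurable_pi_lambda _ fun m => hxmeas m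
  have hKmeas : ∀ (N : ℕ) (a : ℕ → X), Measurable fun ω =>
      solHalf f g N (solHalf f g N a (fun m => x m ω)) (fun m => x (m + 2 ^ N) ω) := by
    intro N a
    have h1 : Measurable fun ω => solHalf f g N a (fun m => x m ω) :=
      (hH2 N).comp (measurable_const.prodMk measurable_id) |>.comp hXv
    have h2 : Measurable fun ω => fun m : ℕ => x (m + 2 ^ N) ω :=
      measurable_pi_lambda _ fun m => hxmeas (m + 2 ^ N)
    exact (hH2 N).comp (h1.prodMk h2)
  constructor
  · -- Part 1 : Ψ^{(N+1)} = 𝔑_g[Ψ^{(N)}]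
    intro N hN
    haveI := hMarkov N hN
    refine Kernel.ext fun a => ?_
    obtain ⟨U, hU, hUsol⟩ := hex (N + 1) (by omega) a (fun _ => 0)
    rw [hΨ (N + 1) (by omega) a (fun _ => 0) U hU hUsol]
    have hptw : ∀ ω, halfState (U ω)
        = sigMinus (solHalf f g N (solHalf f g N (sigPlus a) (fun m => x m ω))
            (fun m => x (m + 2 ^ N) ω)) + xiMap f g a := by
      intro ω
      have hv := shiftRows (hUsol ω)
      have hz : ∀ i, i < N →
          solHalf f g N (sigPlus a) (fun m => x m ω) i = U ω (i + 1 + 1) (2 ^ i) :=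
        fun i hi => regionAgree (isStochRegSol_solF f g N (sigPlus a) (fun m => x m ω)) hv
          (fun _ _ => rfl) (fun _ _ => rfl) (i + 1) (2 ^ i) (by omega) (by omega) (by simp)
      have hud : unitState (fun n m => U ω (n + 1) m)
          = halfState (solF f g N (solHalf f g N (sigPlus a) (fun m => x m ω),
              fun m => x (m + 2 ^ N) ω)) + betaMap g (U ω 1 0) (sigPlus a) :=
        unitDecomp hN hv (isStochRegSol_solF f g N
          (solHalf f g N (sigPlus a) (fun m => x m ω)) (fun m => x (m + 2 ^ N) ω)) hz
      have hb0 : U ω 1 0 = a 0 := by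
        have h := (hUsol ω).2.1 1 le_rfl (by omega)
        simpa using h
      funext i
      cases i with
      | zero =>
        have he := (hUsol ω).2.2.2.2 1 1 le_rfl (by omega) le_rfl
        unfold IdealEq at he
        rw [if_pos (by norm_num)] at he
        norm_num at he
        have h2 : U ω 2 0 = a 1 := by
          have h := (hUsol ω).2.1 2 (by omega) (by omega)
          simpa using h
        calc halfState (U ω) 0 = U ω 1 1 := by norm_num [halfState]
          _ = f (a 0) (a 1) := by rw [he, hb0, h2]
          _ = (sigMinus (solHalf f g N (solHalf f g N (sigPlus a) (fun m => x m ω))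
              (fun m => x (m + 2 ^ N) ω)) + xiMap f g a) 0 := by
            rw [Pi.add_apply]
            show f (a 0) (a 1) = 0 + xiMap f g a 0
            rw [zero_add]
            rfl
      | succ j =>
        have hj := congrFun hud j
        calc halfState (U ω) (j + 1) = unitState (fun n m => U ω (n + 1) m) j := rfl
          _ = halfState (solF f g N (solHalf f g N (sigPlus a) (fun m => x m ω),
              fun m => x (m + 2 ^ N) ω)) j + betaMap g (U ω 1 0) (sigPlus a) j := by
            rw [hj, Pi.add_apply]
          _ = (sigMinus (solHalf f g N (solHalf f g N (sigPlus a) (fun m => x m ω))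
              (fun m => x (m + 2 ^ N) ω)) + xiMap f g a) (j + 1) := by
            rw [hb0, Pi.add_apply]
            cases j with
            | zero => rfl
            | succ k => rfl
    have hsm : Measurable fun u : ℕ → X => sigMinus u + xiMap f g a :=
      measurable_pi_lambda _ fun i =>
        (((measurable_pi_apply i).comp measurable_sigMinus).add_const _)
    have hlaw := keyLaw hfm hgm hxmeas hxlaw hxindep' (hPsiF N hN) (sigPlus a)
    calc Measure.map (fun ω => halfState (U ω)) P
        = Measure.map ((fun u => sigMinus u + xiMap f g a) ∘
            fun ω => solHalf f g N (solHalf f g N (sigPlus a) (fun m => x m ω))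
              (fun m => x (m + 2 ^ N) ω)) P := by rw [funext hptw]; rfl
      _ = Measure.map (fun u => sigMinus u + xiMap f g a)
            (Measure.map (fun ω => solHalf f g N (solHalf f g N (sigPlus a) (fun m => x m ω))
              (fun m => x (m + 2 ^ N) ω)) P) := (Measure.map_map hsm (hKmeas N (sigPlus a))).symm
      _ = Measure.map (fun u => sigMinus u + xiMap f g a) ((Ψ N ∘ₖ Ψ N) (sigPlus a)) := by
            rw [hlaw]
      _ = stochRG f g hf.measurable hg.measurable (Ψ N) a := by
            rw [stochRG, convKer_apply']
            have e1 : (Kernel.deterministic sigMinus measurable_sigMinus ∘ₖ Ψ N ∘ₖ Ψ N ∘ₖ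
                Kernel.deterministic sigPlus measurable_sigPlus) a
                = (Kernel.deterministic sigMinus measurable_sigMinus ∘ₖ Ψ N ∘ₖ Ψ N)
                    (sigPlus a) := by
              rw [Kernel.comp_deterministic_eq_comap, Kernel.comap_apply]
            have e2 : (Kernel.deterministic sigMinus measurable_sigMinus ∘ₖ Ψ N ∘ₖ Ψ N)
                (sigPlus a) = Measure.map sigMinus ((Ψ N ∘ₖ Ψ N) (sigPlus a)) := by
              rw [Kernel.comp_assoc, Kernel.deterministic_comp_eq_map,
                Kernel.map_apply _ measurable_sigMinus]
            have haddx : Measurable fun u : ℕ → X => u + xiMap f g a :=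
              measurable_pi_lambda _ fun i => (measurable_pi_apply i).add_const _
            rw [e1, e2, Measure.map_map haddx measurable_sigMinus]
            rfl
  · -- Part 2 : law of the unit-time state
    intro N hN a b U hU hsol
    haveI := hMarkov N hN
    have hptw : ∀ ω, unitState (U ω)
        = solHalf f g N (solHalf f g N a (fun m => x m ω)) (fun m => x (m + 2 ^ N) ω)
            + betaMap g (b 0) a := by
      intro ω
      have hz : ∀ i, i < N → solHalf f g N a (fun m => x m ω) i = U ω (i + 1) (2 ^ i) :=
        fun i hi => regionAgree (isStochRegSol_solF f g N a (fun m => x m ω)) (hsol ω)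
          (fun _ _ => rfl) (fun _ _ => rfl) (i + 1) (2 ^ i) (by omega) (by omega) (by simp)
      exact unitDecomp hN (hsol ω) (isStochRegSol_solF f g N
        (solHalf f g N a (fun m => x m ω)) (fun m => x (m + 2 ^ N) ω)) hz
    have haddc : Measurable fun u : ℕ → X => u + betaMap g (b 0) a :=
      measurable_pi_lambda _ fun i => (measurable_pi_apply i).add_const _
    calc Measure.map (fun ω => unitState (U ω)) P
        = Measure.map ((fun u => u + betaMap g (b 0) a) ∘
            fun ω => solHalf f g N (solHalf f g N a (fun m => x m ω))
              (fun m => x (m + 2 ^ N) ω)) P := by rw [funext hptw]; rfl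
      _ = Measure.map (fun u => u + betaMap g (b 0) a)
            (Measure.map (fun ω => solHalf f g N (solHalf f g N a (fun m => x m ω))
              (fun m => x (m + 2 ^ N) ω)) P) := (Measure.map_map haddc (hKmeas N a)).symm
      _ = Measure.map (fun u => u + betaMap g (b 0) a) ((Ψ N ∘ₖ Ψ N) a) := by
            rw [keyLaw hfm hgm hxmeas hxlaw hxindep' (hPsiF N hN) a]
      _ = convKer (Ψ N ∘ₖ Ψ N) (betaMap g (b 0))
            (measurable_betaMap g hg.measurable (b 0)) a := by
            rw [convKer_apply']

end SSRG
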